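/- Let (ξ_n)_{n≥1} be i.i.d. fair coin tosses with values in {H,T}, Pr(ξ=H)=Pr(ξ=T)=1/2, and let B_1 = THH, B_2 = HTH, B_3 = HHT. Let τ_i be the first time n such that B_i occurs as a contiguous subpattern of ξ_1…ξ_n and τ = min(τ_1, τ_2, τ_3). Then Pr(τ = τ_1) = 5/12, Pr(τ = τ_2) = 1/3, and Pr(τ = τ_3) = 1/4. -/

import Mathlib

open MeasureTheory ProbabilityTheory

/-- The two-letter alphabet of coin outcomes: heads `H` and tails `T`. -/
inductive Coin : Type
  | H : Coin
  | T : Coin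
  deriving DecidableEq

instance : Fintype Coin := ⟨{Coin.H, Coin.T}, fun x => by cases x <;> simp⟩

instance : MeasurableSpace Coin := ⊤

/-- The word `ξ₁…ξ_n` of the first `n` coin tosses (here `ξ i` denotes the `(i+1)`-st toss). -/
def tossWord {Ω : Type*} (ξ : ℕ → Ω → Coin) (n : ℕ) (ω : Ω) : List Coin :=
  List.ofFn fun i : Fin n => ξ i ω

/-- The first time `n` such that the pattern `Bp` occurs as a contiguous subpattern
of `ξ₁…ξ_n`. -/
noncomputable def firstOcc {Ω : Type*} (Bp : List Coin) (ξ : ℕ → Ω → Coin) (ω : Ω) : ℕ :=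
  sInf {n : ℕ | Bp <:+: tossWord ξ n ω}

namespace CoinRace

open Coin

inductive St : Type
  | e | h | t | hh | ht | th | w1 | w2 | w3
  deriving DecidableEq

instance : Fintype St :=
  ⟨{.e, .h, .t, .hh, .ht, .th, .w1, .w2, .w3}, fun x => by cases x <;> simp⟩

def step : St → Coin → St
  | .e, .H => .h
  | .e, .T => .t
  | .h, .H => .hh
  | .h, .T => .ht
  | .t, .H => .th
  | .t, .T => .t
  | .hh, .H => .hh
  | .hh, .T => .w3
  | .ht, .H => .w2
  | .ht, .T => .t
  | .th, .H => .w1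
  | .th, .T => .ht
  | .w1, _ => .w1
  | .w2, _ => .w2
  | .w3, _ => .w3

def run (s : St) : List Coin → St
  | [] => s
  | c :: v => run (step s c) v

lemma run_append (s : St) (a b : List Coin) : run s (a ++ b) = run (run s a) b := by
  induction a generalizing s with
  | nil => rfl
  | cons c a ih => simpa [run] using ih (step s c)

lemma run_snoc (s : St) (w : List Coin) (c : Coin) :
    run s (w ++ [c]) = step (run s w) c := by
  rw [run_append]; rfl

def B1 : List Coin := [T, H, H]
def B2 : List Coin := [H, T, H]
def B3 : List Coin := [H, H, T]

def noP (w : List Coin) : Prop := ¬ B1 <:+: w ∧ ¬ B2 <:+: w ∧ ¬ B3 <:+: w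

/-- `A` is the unique winner in `w`, at time `n`. -/
def Win (A B C : List Coin) (w : List Coin) : Prop :=
  ∃ n, n ≤ w.length ∧ A <:+: w.take n ∧ ¬ B <:+: w.take n ∧ ¬ C <:+: w.take n ∧
    noP (w.take (n - 1))

lemma noP_short {w : List Coin} (hw : w.length < 3) : noP w := by
  refine ⟨fun h => ?_, fun h => ?_, fun h => ?_⟩ <;>
    · have := h.length_le; simp [B1, B2, B3] at this; omega

lemma noP_replicate (k : ℕ) : noP (List.replicate k H) := by
  refine ⟨fun h => ?_, fun h => ?_, fun h => ?_⟩ <;>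
    · have : T ∈ List.replicate k H := h.subset (by simp [B1, B2, B3])
      simpa using List.eq_of_mem_replicate this

lemma infix_snoc {p q r c : Coin} {w : List Coin} (h : [p, q, r] <:+: w ++ [c]) :
    [p, q, r] <:+: w ∨ (c = r ∧ ∃ a, w = a ++ [p, q]) := by
  obtain ⟨a, b, hab⟩ := h
  rcases b.eq_nil_or_concat with rfl | ⟨b', c', rfl⟩
  · right
    have : (a ++ [p, q]) ++ [r] = w ++ [c] := by simpa using hab
    obtain ⟨h1, h2⟩ := List.append_inj' this rfl
    exact ⟨(by simpa using h2.symm), a, h1.symm⟩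
  · left
    have : (a ++ [p, q, r] ++ b') ++ [c'] = w ++ [c] := by simpa using hab
    obtain ⟨h1, -⟩ := List.append_inj' this rfl
    exact ⟨a, b', h1⟩

lemma last_two_inj {a b : List Coin} {x y x' y' : Coin}
    (h : a ++ [x, y] = b ++ [x', y']) : a = b ∧ x = x' ∧ y = y' := by
  obtain ⟨h1, h2⟩ := List.append_inj' h rfl
  simp only [List.cons.injEq, and_true] at h2
  exact ⟨h1, h2.1, h2.2⟩

lemma noP_snoc {w : List Coin} {c : Coin} (hw : noP w)
    (h1 : ¬(c = H ∧ ∃ a, w = a ++ [T, H]))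
    (h2 : ¬(c = H ∧ ∃ a, w = a ++ [H, T]))
    (h3 : ¬(c = T ∧ ∃ a, w = a ++ [H, H])) : noP (w ++ [c]) := by
  refine ⟨fun h => ?_, fun h => ?_, fun h => ?_⟩
  · rcases infix_snoc h with h' | h'
    exacts [hw.1 h', h1 ⟨h'.1, h'.2⟩]
  · rcases infix_snoc h with h' | h'
    exacts [hw.2.1 h', h2 ⟨h'.1, h'.2⟩]
  · rcases infix_snoc h with h' | h'
    exacts [hw.2.2 h', h3 ⟨h'.1, h'.2⟩]

def StInv : St → List Coin → Prop
  | .e, w => w = []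
  | .h, w => w = [H]
  | .t, w => noP w ∧ (w = [T] ∨ ∃ v, w = v ++ [T, T])
  | .hh, w => ∃ k, 2 ≤ k ∧ w = List.replicate k H
  | .ht, w => noP w ∧ ∃ v, w = v ++ [H, T]
  | .th, w => noP w ∧ ∃ v, w = v ++ [T, H]
  | .w1, w => Win B1 B2 B3 w
  | .w2, w => Win B2 B1 B3 w
  | .w3, w => Win B3 B1 B2 w

lemma win_snoc {A B C : List Coin} {w : List Coin} (c : Coin) (h : Win A B C w) :
    Win A B C (w ++ [c]) := by
  obtain ⟨n, hn, hA, hB, hC, hP⟩ := h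
  refine ⟨n, by simp; omega, ?_, ?_, ?_, ?_⟩ <;>
    rw [List.take_append_of_le_length (by omega)] <;> assumption

theorem stInv_run (w : List Coin) : StInv (run .e w) w := by
  induction w using List.reverseRecOn with
  | nil => rfl
  | append_singleton w c ih =>
    rw [run_snoc]
    rcases hs : run .e w with _ | _ | _ | _ | _ | _ | _ | _ | _ <;>
      rw [hs] at ih <;> cases c
    -- e, H
    · subst ih; exact rfl
    -- e, T
    · subst ih
      exact ⟨noP_short (by simp), Or.inl rfl⟩
    -- h, H
    · subst ih; exact ⟨2, le_refl _, rfl⟩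
    -- h, T
    · subst ih
      exact ⟨noP_short (by simp), [], rfl⟩
    -- t, H  → th
    · obtain ⟨hP, hv⟩ := ih
      constructor
      · refine noP_snoc hP ?_ ?_ ?_
        · rintro ⟨-, a, ha⟩
          rcases hv with rfl | ⟨v, rfl⟩
          · simpa using congrArg List.length ha
          · exact absurd (last_two_inj ha).2.2 (by simp)
        · rintro ⟨-, a, ha⟩
          rcases hv with rfl | ⟨v, rfl⟩
          · simpa using congrArg List.length ha
          · exact absurd (last_two_inj ha).2.1 (by simp)
        · rintro ⟨hc, -⟩; simp at hc
      · rcases hv with rfl | ⟨v, rfl⟩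
        · exact ⟨[], rfl⟩
        · exact ⟨v ++ [T], by simp⟩
    -- t, T → t
    · obtain ⟨hP, hv⟩ := ih
      constructor
      · refine noP_snoc hP ?_ ?_ ?_
        · rintro ⟨hc, -⟩; simp at hc
        · rintro ⟨hc, -⟩; simp at hc
        · rintro ⟨-, a, ha⟩
          rcases hv with rfl | ⟨v, rfl⟩
          · simpa using congrArg List.length ha
          · exact absurd (last_two_inj ha).2.2 (by simp)
      · right
        rcases hv with rfl | ⟨v, rfl⟩
        · exact ⟨[], rfl⟩
        · exact ⟨v ++ [T], by simp⟩
    -- hh, H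
    · obtain ⟨k, hk, rfl⟩ := ih
      exact ⟨k + 1, by omega, by rw [List.replicate_succ']⟩
    -- hh, T → w3
    · obtain ⟨k, hk, rfl⟩ := ih
      have hk2 : k - 2 + 2 = k := by omega
      refine ⟨k + 1, by simp, ?_, ?_, ?_, ?_⟩
      · rw [List.take_of_length_le (by simp)]
        refine ⟨List.replicate (k - 2) H, [], ?_⟩
        conv_rhs => rw [← hk2, List.replicate_add]
        simp [B3]
      · rw [List.take_of_length_le (by simp)]
        intro hI
        rcases infix_snoc hI with h' | ⟨hc, -⟩
        · exact (noP_replicate k).1 h'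
        · simp at hc
      · rw [List.take_of_length_le (by simp)]
        intro hI
        rcases infix_snoc hI with h' | ⟨hc, -⟩
        · exact (noP_replicate k).2.1 h'
        · simp at hc
      · rw [Nat.add_sub_cancel, List.take_left' (by simp)]
        exact noP_replicate k
    -- ht, H → w2
    · obtain ⟨hP, v, rfl⟩ := ih
      refine ⟨(v ++ [H, T]).length + 1, by simp, ?_, ?_, ?_, ?_⟩
      · rw [List.take_of_length_le (by simp)]
        exact ⟨v, [], by simp [B2]⟩
      · rw [List.take_of_length_le (by simp)]
        intro hI
        rcases infix_snoc hI with h' | ⟨-, a, ha⟩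
        · exact hP.1 h'
        · exact absurd (last_two_inj ha).2.1 (by simp)
      · rw [List.take_of_length_le (by simp)]
        intro hI
        rcases infix_snoc hI with h' | ⟨hc, -⟩
        · exact hP.2.2 h'
        · simp at hc
      · rw [Nat.add_sub_cancel, List.take_left' rfl]
        exact hP
    -- ht, T → t
    · obtain ⟨hP, v, rfl⟩ := ih
      constructor
      · refine noP_snoc hP ?_ ?_ ?_
        · rintro ⟨hc, -⟩; simp at hc
        · rintro ⟨hc, -⟩; simp at hc
        · rintro ⟨-, a, ha⟩
          exact absurd (last_two_inj ha).2.2 (by simp)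
      · exact Or.inr ⟨v ++ [H], by simp⟩
    -- th, H → w1
    · obtain ⟨hP, v, rfl⟩ := ih
      refine ⟨(v ++ [T, H]).length + 1, by simp, ?_, ?_, ?_, ?_⟩
      · rw [List.take_of_length_le (by simp)]
        exact ⟨v, [], by simp [B1]⟩
      · rw [List.take_of_length_le (by simp)]
        intro hI
        rcases infix_snoc hI with h' | ⟨-, a, ha⟩
        · exact hP.2.1 h'
        · exact absurd (last_two_inj ha).2.1 (by simp)
      · rw [List.take_of_length_le (by simp)]
        intro hI
        rcases infix_snoc hI with h' | ⟨hc, -⟩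
        · exact hP.2.2 h'
        · simp at hc
      · rw [Nat.add_sub_cancel, List.take_left' rfl]
        exact hP
    -- th, T → ht
    · obtain ⟨hP, v, rfl⟩ := ih
      constructor
      · refine noP_snoc hP ?_ ?_ ?_
        · rintro ⟨hc, -⟩; simp at hc
        · rintro ⟨hc, -⟩; simp at hc
        · rintro ⟨-, a, ha⟩
          exact absurd (last_two_inj ha).2.1 (by simp)
      · exact ⟨v ++ [T], by simp⟩
    -- w1
    · exact win_snoc _ ih
    · exact win_snoc _ ih
    -- w2
    · exact win_snoc _ ih
    · exact win_snoc _ ih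
    -- w3
    · exact win_snoc _ ih
    · exact win_snoc _ ih

end CoinRace

namespace CoinRace
open Coin

lemma run_closed (P : St → Prop) (hP : ∀ s c, P s → P (step s c)) :
    ∀ (v : List Coin) (s : St), P s → P (run s v) := by
  intro v
  induction v with
  | nil => intro s hs; exact hs
  | cons c v ih => intro s hs; exact ih _ (hP s c hs)

lemma run_w1_absorb (v : List Coin) : run .w1 v = .w1 :=
  run_closed (fun s => s = .w1) (by decide) v _ rfl
lemma run_w2_absorb (v : List Coin) : run .w2 v = .w2 :=
  run_closed (fun s => s = .w2) (by decide) v _ rfl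
lemma run_w3_absorb (v : List Coin) : run .w3 v = .w3 :=
  run_closed (fun s => s = .w3) (by decide) v _ rfl

lemma noP_of_live {w : List Coin} (h1 : run .e w ≠ .w1) (h2 : run .e w ≠ .w2)
    (h3 : run .e w ≠ .w3) : noP w := by
  have hI := stInv_run w
  rcases h : run .e w <;> rw [h] at hI
  · subst hI; exact noP_short (by simp)
  · subst hI; exact noP_short (by simp)
  · exact hI.1
  · obtain ⟨k, -, rfl⟩ := hI; exact noP_replicate k
  · exact hI.1
  · exact hI.1
  · exact absurd h h1
  · exact absurd h h2
  · exact absurd h h3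

lemma run_win_of_not_noP {w : List Coin} (h : ¬ noP w) :
    run .e w = .w1 ∨ run .e w = .w2 ∨ run .e w = .w3 := by
  by_contra hc
  push_neg at hc
  exact h (noP_of_live hc.1 hc.2.1 hc.2.2)

section Bridge

variable {Ω : Type*} (ξ : ℕ → Ω → Coin) (ω : Ω)

lemma tossWord_length (n : ℕ) : (tossWord ξ n ω).length = n := by simp [tossWord]

lemma tossWord_take {n m : ℕ} (h : n ≤ m) :
    (tossWord ξ m ω).take n = tossWord ξ n ω := by
  apply List.ext_getElem
  · simp [tossWord]; omega
  · intro i h1 h2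
    simp [tossWord]

lemma infix_mono {P : List Coin} {n m : ℕ} (h : n ≤ m)
    (hP : P <:+: tossWord ξ n ω) : P <:+: tossWord ξ m ω := by
  rw [← tossWord_take ξ ω h] at hP
  exact hP.trans (List.take_prefix _ _).isInfix

lemma run_mono_w {n m : ℕ} (h : n ≤ m) {s : St}
    (habs : ∀ v, run s v = s) (hs : run .e (tossWord ξ n ω) = s) :
    run .e (tossWord ξ m ω) = s := by
  have : tossWord ξ m ω = tossWord ξ n ω ++ (tossWord ξ m ω).drop n := by
    rw [← tossWord_take ξ ω h, List.take_append_drop]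
  rw [this, run_append, hs, habs]

lemma mem_patterns_noP {P w : List Coin} (hP : P = B1 ∨ P = B2 ∨ P = B3)
    (h : noP w) : ¬ P <:+: w := by
  rcases hP with rfl | rfl | rfl
  exacts [h.1, h.2.1, h.2.2]

/-- From a `Win` certificate at time `N`: the winner's first occurrence is strictly
before the other two patterns' first occurrences. -/
lemma win_firstOcc {PA PB PC : List Coin} {N : ℕ}
    (hA : PA = B1 ∨ PA = B2 ∨ PA = B3) (hB : PB = B1 ∨ PB = B2 ∨ PB = B3)
    (hC : PC = B1 ∨ PC = B2 ∨ PC = B3)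
    (hwin : Win PA PB PC (tossWord ξ N ω))
    (hneB : ∃ k, PB <:+: tossWord ξ k ω) (hneC : ∃ k, PC <:+: tossWord ξ k ω) :
    firstOcc PA ξ ω < firstOcc PB ξ ω ∧ firstOcc PA ξ ω < firstOcc PC ξ ω := by
  obtain ⟨n, hn, hAo, hBo, hCo, hP⟩ := hwin
  rw [tossWord_length] at hn
  rw [tossWord_take ξ ω hn] at hAo hBo hCo
  rw [tossWord_take ξ ω (by omega)] at hP
  have hprev : ∀ m < n, ∀ P, (P = B1 ∨ P = B2 ∨ P = B3) → ¬ P <:+: tossWord ξ m ω := by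
    intro m hm P hPm hocc
    exact mem_patterns_noP hPm hP (infix_mono ξ ω (by omega) hocc)
  have hAle : firstOcc PA ξ ω ≤ n := Nat.sInf_le hAo
  have key : ∀ (Q : List Coin), (Q = B1 ∨ Q = B2 ∨ Q = B3) →
      (¬ Q <:+: tossWord ξ n ω) → (∃ k, Q <:+: tossWord ξ k ω) →
      n < firstOcc Q ξ ω := by
    intro Q hQ hQn hQne
    have hmem : firstOcc Q ξ ω ∈ {k : ℕ | Q <:+: tossWord ξ k ω} := Nat.sInf_mem hQne
    by_contra hcon
    push_neg at hcon
    rcases lt_or_eq_of_le hcon with hlt | heq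
    · exact hprev _ hlt Q hQ hmem
    · rw [heq] at hmem; exact hQn hmem
  exact ⟨lt_of_le_of_lt hAle (key PB hB hBo hneB),
    lt_of_le_of_lt hAle (key PC hC hCo hneC)⟩

/-- On the event `G` where all three patterns occur, `τ = τᵢ` iff the DFA reaches
the winning state `wᵢ`. -/
lemma tau_iff_W
    (hne1 : ∃ k, B1 <:+: tossWord ξ k ω) (hne2 : ∃ k, B2 <:+: tossWord ξ k ω)
    (hne3 : ∃ k, B3 <:+: tossWord ξ k ω) :
    (min (min (firstOcc B1 ξ ω) (firstOcc B2 ξ ω)) (firstOcc B3 ξ ω) = firstOcc B1 ξ ω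
      ↔ ∃ N, run .e (tossWord ξ N ω) = .w1)
    ∧ (min (min (firstOcc B1 ξ ω) (firstOcc B2 ξ ω)) (firstOcc B3 ξ ω) = firstOcc B2 ξ ω
      ↔ ∃ N, run .e (tossWord ξ N ω) = .w2)
    ∧ (min (min (firstOcc B1 ξ ω) (firstOcc B2 ξ ω)) (firstOcc B3 ξ ω) = firstOcc B3 ξ ω
      ↔ ∃ N, run .e (tossWord ξ N ω) = .w3) := by
  obtain ⟨k1, h1⟩ := hne1
  obtain ⟨k2, h2⟩ := hne2
  obtain ⟨k3, h3⟩ := hne3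
  set N₀ := max (max k1 k2) k3 with hN₀
  have hocc1 : B1 <:+: tossWord ξ N₀ ω := infix_mono ξ ω (by omega) h1
  have hocc2 : B2 <:+: tossWord ξ N₀ ω := infix_mono ξ ω (by omega) h2
  have hocc3 : B3 <:+: tossWord ξ N₀ ω := infix_mono ξ ω (by omega) h3
  have hwin : run .e (tossWord ξ N₀ ω) = .w1 ∨ run .e (tossWord ξ N₀ ω) = .w2 ∨
      run .e (tossWord ξ N₀ ω) = .w3 :=
    run_win_of_not_noP (fun hc => hc.1 hocc1)
  -- consequences of reaching each winning state
  have K1 : (∃ N, run .e (tossWord ξ N ω) = .w1) →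
      firstOcc B1 ξ ω < firstOcc B2 ξ ω ∧ firstOcc B1 ξ ω < firstOcc B3 ξ ω := by
    rintro ⟨N, hN⟩
    have hI := stInv_run (tossWord ξ N ω)
    rw [hN] at hI
    exact win_firstOcc ξ ω (Or.inl rfl) (Or.inr (Or.inl rfl)) (Or.inr (Or.inr rfl))
      hI ⟨k2, h2⟩ ⟨k3, h3⟩
  have K2 : (∃ N, run .e (tossWord ξ N ω) = .w2) →
      firstOcc B2 ξ ω < firstOcc B1 ξ ω ∧ firstOcc B2 ξ ω < firstOcc B3 ξ ω := by
    rintro ⟨N, hN⟩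
    have hI := stInv_run (tossWord ξ N ω)
    rw [hN] at hI
    exact win_firstOcc ξ ω (Or.inr (Or.inl rfl)) (Or.inl rfl) (Or.inr (Or.inr rfl))
      hI ⟨k1, h1⟩ ⟨k3, h3⟩
  have K3 : (∃ N, run .e (tossWord ξ N ω) = .w3) →
      firstOcc B3 ξ ω < firstOcc B1 ξ ω ∧ firstOcc B3 ξ ω < firstOcc B2 ξ ω := by
    rintro ⟨N, hN⟩
    have hI := stInv_run (tossWord ξ N ω)
    rw [hN] at hI
    exact win_firstOcc ξ ω (Or.inr (Or.inr rfl)) (Or.inl rfl) (Or.inr (Or.inl rfl))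
      hI ⟨k1, h1⟩ ⟨k2, h2⟩
  rcases hwin with hw | hw | hw
  · have h := K1 ⟨N₀, hw⟩
    refine ⟨⟨fun _ => ⟨N₀, hw⟩, fun _ => by omega⟩, ⟨fun hmin => ?_, fun hE => ?_⟩,
      ⟨fun hmin => ?_, fun hE => ?_⟩⟩
    · omega
    · have := K2 hE; omega
    · omega
    · have := K3 hE; omega
  · have h := K2 ⟨N₀, hw⟩
    refine ⟨⟨fun hmin => ?_, fun hE => ?_⟩, ⟨fun _ => ⟨N₀, hw⟩, fun _ => by omega⟩,
      ⟨fun hmin => ?_, fun hE => ?_⟩⟩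
    · omega
    · have := K1 hE; omega
    · omega
    · have := K3 hE; omega
  · have h := K3 ⟨N₀, hw⟩
    refine ⟨⟨fun hmin => ?_, fun hE => ?_⟩, ⟨fun hmin => ?_, fun hE => ?_⟩,
      ⟨fun _ => ⟨N₀, hw⟩, fun _ => by omega⟩⟩
    · omega
    · have := K1 hE; omega
    · omega
    · have := K2 hE; omega

end Bridge
end CoinRace

namespace CoinRace
open Coin MeasureTheory ProbabilityTheory ENNReal

/-- Number of words of length `n` that drive the DFA from `s` to `tgt`. -/
def cnt (tgt : St) : ℕ → St → ℕ
  | 0, s => if s = tgt then 1 else 0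
  | n + 1, s => cnt tgt n (step s .H) + cnt tgt n (step s .T)

lemma coin_sum (f : Coin → ℕ) : ∑ c : Coin, f c = f .H + f .T := rfl

lemma cnt_card (tgt : St) (n : ℕ) (s : St) :
    cnt tgt n s = Fintype.card {v : Fin n → Coin // run s (List.ofFn v) = tgt} := by
  induction n generalizing s with
  | zero =>
    rcases eq_or_ne s tgt with h | h
    · subst h
      show (if s = s then 1 else 0) = _
      rw [if_pos rfl]
      refine (Fintype.card_eq_one_iff.mpr ?_).symm
      refine ⟨⟨fun i => i.elim0, by simp [run]⟩, ?_⟩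
      rintro ⟨v, hv⟩
      ext i
      exact i.elim0
    · show (if s = tgt then 1 else 0) = _
      rw [if_neg h]
      refine (Fintype.card_eq_zero_iff.mpr ?_).symm
      refine ⟨fun ⟨v, hv⟩ => ?_⟩
      apply h
      have : List.ofFn v = [] := by simp
      rw [this] at hv
      exact hv
  | succ n ih =>
    have e1 : {v : Fin (n + 1) → Coin // run s (List.ofFn v) = tgt} ≃
        Σ c : Coin, {u : Fin n → Coin // run (step s c) (List.ofFn u) = tgt} := by
      refine ⟨fun v => ⟨v.1 0, ⟨fun i => v.1 i.succ, ?_⟩⟩,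
        fun p => ⟨Fin.cons p.1 p.2.1, ?_⟩, ?_, ?_⟩
      · have := v.2
        rw [List.ofFn_succ] at this
        exact this
      · rw [List.ofFn_succ]
        simpa [run] using p.2.2
      · rintro ⟨v, hv⟩
        ext i
        refine Fin.cases ?_ (fun j => ?_) i <;> simp
      · rintro ⟨c, u, hu⟩
        refine Sigma.ext rfl ?_
        simp
        rfl
    rw [Fintype.card_congr e1, Fintype.card_sigma]
    simp only [cnt, coin_sum]
    rw [ih, ih]

section Meas

variable {Ω : Type*} [MeasurableSpace Ω] (μ : Measure Ω) [IsProbabilityMeasure μ]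
    (ξ : ℕ → Ω → Coin) (hmeas : ∀ n, Measurable (ξ n))
    (hindep : iIndepFun ξ μ)
    (hdist : ∀ n c, μ {ω | ξ n ω = c} = 1 / 2)

/-- Cylinder set. -/
def cyl (n : ℕ) (v : Fin n → Coin) : Set Ω := {ω | ∀ j : Fin n, ξ (j : ℕ) ω = v j}

include hmeas in
lemma measurableSet_cyl (n : ℕ) (v : Fin n → Coin) : MeasurableSet (cyl ξ n v) := by
  have : cyl ξ n v = ⋂ j : Fin n, (ξ j) ⁻¹' {v j} := by
    ext ω; simp [cyl, Set.mem_iInter]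
  rw [this]
  exact MeasurableSet.iInter fun j => (hmeas j) (by trivial)

include hindep hdist in
lemma meas_cyl (n : ℕ) (v : Fin n → Coin) :
    μ (cyl ξ n v) = (2 : ℝ≥0∞)⁻¹ ^ n := by
  classical
  set vv : ℕ → Coin := fun i => if h : i < n then v ⟨i, h⟩ else Coin.H with hvv
  have hset : cyl ξ n v = ⋂ i ∈ Finset.range n, (ξ i) ⁻¹' {vv i} := by
    ext ω
    simp only [cyl, Set.mem_setOf_eq, Set.mem_iInter, Finset.mem_range,
      Set.mem_preimage, Set.mem_singleton_iff]
    constructor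
    · intro h i hi
      simp only [hvv, dif_pos hi]
      exact h ⟨i, hi⟩
    · intro h j
      have := h j.1 j.2
      simpa [hvv, dif_pos j.2] using this
  have key := hindep.meas_biInter (S := Finset.range n)
    (s := fun i => (ξ i) ⁻¹' {vv i}) (fun i _ => ⟨{vv i}, trivial, rfl⟩)
  rw [hset, key]
  have : ∀ i ∈ Finset.range n, μ ((ξ i) ⁻¹' {vv i}) = 2⁻¹ := by
    intro i _
    have := hdist i (vv i)
    rw [one_div] at this
    exact this
  rw [Finset.prod_congr rfl this, Finset.prod_const, Finset.card_range]

/-- The event that reading the first `n` tosses drives the DFA from `s` to `tgt`. -/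
def Dset (tgt s : St) (n : ℕ) : Set Ω := {ω | run s (tossWord ξ n ω) = tgt}

lemma Dset_eq_union (tgt s : St) (n : ℕ) :
    Dset ξ tgt s n =
      ⋃ v ∈ Finset.univ.filter (fun v : Fin n → Coin => run s (List.ofFn v) = tgt),
        cyl ξ n v := by
  ext ω
  simp only [Dset, Set.mem_setOf_eq, Set.mem_iUnion, Finset.mem_filter,
    Finset.mem_univ, true_and, cyl]
  constructor
  · intro h
    exact ⟨fun j => ξ j ω, h, fun j => rfl⟩
  · rintro ⟨v, hv, hc⟩
    have : tossWord ξ n ω = List.ofFn v := by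
      unfold tossWord
      congr 1
      funext j
      exact hc j
    rw [this]
    exact hv

include hmeas in
lemma measurableSet_Dset (tgt s : St) (n : ℕ) : MeasurableSet (Dset ξ tgt s n) := by
  rw [Dset_eq_union ξ tgt s n]
  exact (Finset.univ.filter _).measurableSet_biUnion
    fun v _ => measurableSet_cyl ξ hmeas n v

include hmeas hindep hdist in
lemma meas_Dset (tgt s : St) (n : ℕ) :
    μ (Dset ξ tgt s n) = (cnt tgt n s : ℝ≥0∞) * (2 : ℝ≥0∞)⁻¹ ^ n := by
  classical
  have hdisj : (↑(Finset.univ.filter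
      (fun v : Fin n → Coin => run s (List.ofFn v) = tgt)) : Set (Fin n → Coin)).PairwiseDisjoint
      (cyl ξ n) := by
    rintro v hv u hu hvu
    simp only [Function.onFun]
    refine Set.disjoint_left.2 fun ω hωv hωu => hvu ?_
    funext j
    rw [← hωv j, ← hωu j]
  rw [Dset_eq_union ξ tgt s n,
    measure_biUnion_finset hdisj (fun v _ => measurableSet_cyl ξ hmeas n v)]
  have : ∀ v ∈ Finset.univ.filter (fun v : Fin n → Coin => run s (List.ofFn v) = tgt),
      μ (cyl ξ n v) = (2 : ℝ≥0∞)⁻¹ ^ n := fun v _ => meas_cyl μ ξ hindep hdist n v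
  rw [Finset.sum_congr rfl this, Finset.sum_const, nsmul_eq_mul]
  congr 1
  rw [cnt_card, Fintype.card_subtype]

lemma Dset_mono (tgt s : St) (habs : ∀ c, step tgt c = tgt) :
    Monotone fun n => Dset ξ tgt s n := by
  refine monotone_nat_of_le_succ fun n ω hω => ?_
  have hw : tossWord ξ (n + 1) ω = tossWord ξ n ω ++ [ξ n ω] := by
    unfold tossWord
    rw [List.ofFn_succ']
    simp [List.concat_eq_append]
  simp only [Dset, Set.mem_setOf_eq] at hω ⊢
  rw [hw, run_snoc, hω, habs]

/-- The event of eventually reaching `tgt` from `s`. -/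
def WF (tgt s : St) : Set Ω := ⋃ n, Dset ξ tgt s n

include hmeas in
lemma measurableSet_WF (tgt s : St) : MeasurableSet (WF ξ tgt s) :=
  MeasurableSet.iUnion fun n => measurableSet_Dset ξ hmeas tgt s n

lemma meas_WF (tgt s : St) (habs : ∀ c, step tgt c = tgt) :
    μ (WF ξ tgt s) = ⨆ n, μ (Dset ξ tgt s n) :=
  (Dset_mono ξ tgt s habs).measure_iUnion

include hmeas hindep hdist in
lemma meas_WF_rec (tgt s : St) (habs : ∀ c, step tgt c = tgt) :
    μ (WF ξ tgt s) = 2⁻¹ * μ (WF ξ tgt (step s .H)) + 2⁻¹ * μ (WF ξ tgt (step s .T)) := by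
  have hmono : ∀ s', Monotone fun n => μ (Dset ξ tgt s' n) :=
    fun s' => fun a b hab => measure_mono (Dset_mono ξ tgt s' habs hab)
  have hstep : ∀ n s', μ (Dset ξ tgt s' (n + 1)) =
      2⁻¹ * μ (Dset ξ tgt (step s' .H) n) + 2⁻¹ * μ (Dset ξ tgt (step s' .T) n) := by
    intro n s'
    rw [meas_Dset μ ξ hmeas hindep hdist tgt, meas_Dset μ ξ hmeas hindep hdist tgt,
      meas_Dset μ ξ hmeas hindep hdist tgt]
    show ((cnt tgt n (step s' .H) + cnt tgt n (step s' .T) : ℕ) : ℝ≥0∞) * 2⁻¹ ^ (n + 1) = _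
    push_cast
    ring
  rw [meas_WF μ ξ tgt s habs]
  have htail : (⨆ n, μ (Dset ξ tgt s n)) = ⨆ n, μ (Dset ξ tgt s (n + 1)) := by
    apply le_antisymm
    · exact iSup_le fun n => le_trans (hmono s (Nat.le_succ n)) (le_iSup (fun m => μ (Dset ξ tgt s (m + 1))) n)
    · exact iSup_le fun n => le_iSup (fun n => μ (Dset ξ tgt s n)) (n + 1)
  rw [htail]
  simp_rw [hstep]
  rw [← ENNReal.iSup_add_iSup_of_monotone
      (fun a b hab => mul_le_mul_right (hmono _ hab) _)
      (fun a b hab => mul_le_mul_right (hmono _ hab) _),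
    ← ENNReal.mul_iSup, ← ENNReal.mul_iSup,
    ← meas_WF μ ξ tgt _ habs, ← meas_WF μ ξ tgt _ habs]

lemma meas_WF_self (tgt : St) (habs : ∀ c, step tgt c = tgt) :
    μ (WF ξ tgt tgt) = 1 := by
  have : Dset ξ tgt tgt 0 = Set.univ := by
    ext ω
    simp [Dset, tossWord, run]
  apply le_antisymm prob_le_one
  calc (1 : ℝ≥0∞) = μ Set.univ := (measure_univ).symm
    _ = μ (Dset ξ tgt tgt 0) := by rw [this]
    _ ≤ μ (WF ξ tgt tgt) := measure_mono (Set.subset_iUnion _ 0)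

lemma meas_WF_zero (tgt s : St) (P : St → Prop) (hP : ∀ s' c, P s' → P (step s' c))
    (hs : P s) (htgt : ¬ P tgt) : μ (WF ξ tgt s) = 0 := by
  have : WF ξ tgt s = ∅ := by
    ext ω
    simp only [WF, Set.mem_iUnion, Dset, Set.mem_setOf_eq, Set.mem_empty_iff_false,
      iff_false, not_exists]
    intro n h
    exact htgt (h ▸ run_closed P hP _ _ hs)
  rw [this, measure_empty]

end Meas
end CoinRace

namespace CoinRace
open Coin MeasureTheory ProbabilityTheory ENNReal

section Solve

variable {Ω : Type*} [MeasurableSpace Ω] (μ : Measure Ω) [IsProbabilityMeasure μ]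
    (ξ : ℕ → Ω → Coin) (hmeas : ∀ n, Measurable (ξ n))
    (hindep : iIndepFun ξ μ)
    (hdist : ∀ n c, μ {ω | ξ n ω = c} = 1 / 2)

include hmeas hindep hdist in
lemma real_rec (tgt s : St) (habs : ∀ c, step tgt c = tgt) :
    (μ (WF ξ tgt s)).toReal =
      2⁻¹ * (μ (WF ξ tgt (step s .H))).toReal + 2⁻¹ * (μ (WF ξ tgt (step s .T))).toReal := by
  rw [meas_WF_rec μ ξ hmeas hindep hdist tgt s habs, ENNReal.toReal_add, ENNReal.toReal_mul,
    ENNReal.toReal_mul]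
  · norm_num
  · exact ENNReal.mul_ne_top (by norm_num) (measure_ne_top μ _)
  · exact ENNReal.mul_ne_top (by norm_num) (measure_ne_top μ _)

lemma toReal_WF_self (tgt : St) (habs : ∀ c, step tgt c = tgt) :
    (μ (WF ξ tgt tgt)).toReal = 1 := by
  rw [meas_WF_self μ ξ tgt habs]; simp

lemma ofReal_result (tgt : St) {x : ℝ} (h : (μ (WF ξ tgt .e)).toReal = x) :
    μ (WF ξ tgt .e) = ENNReal.ofReal x := by
  rw [← h, ENNReal.ofReal_toReal (measure_ne_top μ _)]

include hmeas hindep hdist in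
lemma meas_WF_w1 : μ (WF ξ .w1 .e) = 5 / 12 := by
  have habs : ∀ c, step .w1 c = .w1 := by decide
  have hw2 : (μ (WF ξ .w1 .w2)).toReal = 0 := by
    rw [meas_WF_zero μ ξ .w1 .w2 (fun s => s = .w2) (by decide) rfl (by decide)]; simp
  have hhh : (μ (WF ξ .w1 .hh)).toReal = 0 := by
    rw [meas_WF_zero μ ξ .w1 .hh (fun s => s = .hh ∨ s = .w3) (by decide)
      (Or.inl rfl) (by decide)]
    simp
  have hw1 : (μ (WF ξ .w1 .w1)).toReal = 1 := toReal_WF_self μ ξ .w1 habs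
  have Et := real_rec μ ξ hmeas hindep hdist .w1 .t habs
  have Eth := real_rec μ ξ hmeas hindep hdist .w1 .th habs
  have Eht := real_rec μ ξ hmeas hindep hdist .w1 .ht habs
  have Eh := real_rec μ ξ hmeas hindep hdist .w1 .h habs
  have Ee := real_rec μ ξ hmeas hindep hdist .w1 .e habs
  simp only [step] at Et Eth Eht Eh Ee
  rw [hw1] at Eth
  rw [hw2] at Eht
  rw [hhh] at Eh
  have hval : (μ (WF ξ .w1 .e)).toReal = 5 / 12 := by linarith
  rw [ofReal_result μ ξ .w1 hval]
  rw [ENNReal.ofReal_div_of_pos (by norm_num)]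
  norm_num

include hmeas hindep hdist in
lemma meas_WF_w2 : μ (WF ξ .w2 .e) = 1 / 3 := by
  have habs : ∀ c, step .w2 c = .w2 := by decide
  have hw1 : (μ (WF ξ .w2 .w1)).toReal = 0 := by
    rw [meas_WF_zero μ ξ .w2 .w1 (fun s => s = .w1) (by decide) rfl (by decide)]; simp
  have hhh : (μ (WF ξ .w2 .hh)).toReal = 0 := by
    rw [meas_WF_zero μ ξ .w2 .hh (fun s => s = .hh ∨ s = .w3) (by decide)
      (Or.inl rfl) (by decide)]
    simp
  have hw2 : (μ (WF ξ .w2 .w2)).toReal = 1 := toReal_WF_self μ ξ .w2 habs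
  have Et := real_rec μ ξ hmeas hindep hdist .w2 .t habs
  have Eth := real_rec μ ξ hmeas hindep hdist .w2 .th habs
  have Eht := real_rec μ ξ hmeas hindep hdist .w2 .ht habs
  have Eh := real_rec μ ξ hmeas hindep hdist .w2 .h habs
  have Ee := real_rec μ ξ hmeas hindep hdist .w2 .e habs
  simp only [step] at Et Eth Eht Eh Ee
  rw [hw1] at Eth
  rw [hw2] at Eht
  rw [hhh] at Eh
  have hval : (μ (WF ξ .w2 .e)).toReal = 1 / 3 := by linarith
  rw [ofReal_result μ ξ .w2 hval]
  rw [ENNReal.ofReal_div_of_pos (by norm_num)]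
  norm_num

include hmeas hindep hdist in
lemma meas_WF_w3 : μ (WF ξ .w3 .e) = 1 / 4 := by
  have habs : ∀ c, step .w3 c = .w3 := by decide
  have Pt : ∀ s' c, (s' = .t ∨ s' = .th ∨ s' = .ht ∨ s' = .w1 ∨ s' = .w2) →
      (step s' c = .t ∨ step s' c = .th ∨ step s' c = .ht ∨ step s' c = .w1 ∨
        step s' c = .w2) := by decide
  have ht0 : (μ (WF ξ .w3 .t)).toReal = 0 := by
    rw [meas_WF_zero μ ξ .w3 .t _ Pt (Or.inl rfl) (by decide)]; simp
  have hht0 : (μ (WF ξ .w3 .ht)).toReal = 0 := by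
    rw [meas_WF_zero μ ξ .w3 .ht _ Pt (Or.inr (Or.inr (Or.inl rfl))) (by decide)]; simp
  have hw3 : (μ (WF ξ .w3 .w3)).toReal = 1 := toReal_WF_self μ ξ .w3 habs
  have Ehh := real_rec μ ξ hmeas hindep hdist .w3 .hh habs
  have Eh := real_rec μ ξ hmeas hindep hdist .w3 .h habs
  have Ee := real_rec μ ξ hmeas hindep hdist .w3 .e habs
  simp only [step] at Ehh Eh Ee
  rw [hw3] at Ehh
  rw [hht0] at Eh
  rw [ht0] at Ee
  have hval : (μ (WF ξ .w3 .e)).toReal = 1 / 4 := by linarith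
  rw [ofReal_result μ ξ .w3 hval]
  rw [ENNReal.ofReal_div_of_pos (by norm_num)]
  norm_num

end Solve
end CoinRace

namespace CoinRace
open Coin MeasureTheory ProbabilityTheory ENNReal

section Main

variable {Ω : Type*} [MeasurableSpace Ω] (μ : Measure Ω) [IsProbabilityMeasure μ]
    (ξ : ℕ → Ω → Coin) (hmeas : ∀ n, Measurable (ξ n))

include hmeas in
lemma measurableSet_word_event (n : ℕ) (p : (Fin n → Coin) → Prop) :
    MeasurableSet {ω | p (fun i : Fin n => ξ (i : ℕ) ω)} := by
  classical
  have hrw : {ω | p (fun i : Fin n => ξ (i : ℕ) ω)} =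
      ⋃ v ∈ Finset.univ.filter p, cyl ξ n v := by
    ext ω
    simp only [Set.mem_setOf_eq, Set.mem_iUnion, Finset.mem_filter, Finset.mem_univ,
      true_and, cyl]
    constructor
    · intro h; exact ⟨_, h, fun j => rfl⟩
    · rintro ⟨v, hv, hc⟩
      have : (fun i : Fin n => ξ (i : ℕ) ω) = v := funext hc
      rw [this]; exact hv
  rw [hrw]
  exact (Finset.univ.filter p).measurableSet_biUnion fun v _ => measurableSet_cyl ξ hmeas n v

include hmeas in
lemma measurableSet_occ (P : List Coin) (n : ℕ) :
    MeasurableSet {ω | P <:+: tossWord ξ n ω} :=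
  measurableSet_word_event ξ hmeas n (fun v => P <:+: List.ofFn v)

end Main
end CoinRace


open CoinRace in
/-- For i.i.d. fair coin tosses and the patterns `B₁ = THH`, `B₂ = HTH`, `B₃ = HHT`:
`Pr(τ = τ₁) = 5/12`, `Pr(τ = τ₂) = 1/3`, `Pr(τ = τ₃) = 1/4`. -/

theorem coin_example_no_initial_pattern
    {Ω : Type*} [MeasurableSpace Ω] (μ : Measure Ω) [IsProbabilityMeasure μ]
    (ξ : ℕ → Ω → Coin) (hmeas : ∀ n, Measurable (ξ n))
    (hindep : iIndepFun ξ μ)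
    (hdist : ∀ n c, μ {ω | ξ n ω = c} = 1 / 2)
    (τ₁ τ₂ τ₃ τ : Ω → ℕ)
    (hτ₁ : τ₁ = firstOcc [Coin.T, Coin.H, Coin.H] ξ)
    (hτ₂ : τ₂ = firstOcc [Coin.H, Coin.T, Coin.H] ξ)
    (hτ₃ : τ₃ = firstOcc [Coin.H, Coin.H, Coin.T] ξ)
    (hτ : τ = fun ω => min (min (τ₁ ω) (τ₂ ω)) (τ₃ ω))
    (hfin : μ {ω | (∃ n, [Coin.T, Coin.H, Coin.H] <:+: tossWord ξ n ω) ∧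
        (∃ n, [Coin.H, Coin.T, Coin.H] <:+: tossWord ξ n ω) ∧
        (∃ n, [Coin.H, Coin.H, Coin.T] <:+: tossWord ξ n ω)} = 1) :
    μ {ω | τ ω = τ₁ ω} = 5 / 12 ∧ μ {ω | τ ω = τ₂ ω} = 1 / 3 ∧
      μ {ω | τ ω = τ₃ ω} = 1 / 4 := by
  classical
  subst hτ hτ₁ hτ₂ hτ₃
  set G : Set Ω := {ω | (∃ n, B1 <:+: tossWord ξ n ω) ∧ (∃ n, B2 <:+: tossWord ξ n ω) ∧
      (∃ n, B3 <:+: tossWord ξ n ω)} with hGdef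
  have hGfull : μ G = 1 := hfin
  have hGmeas : MeasurableSet G := by
    have : G = {ω | ∃ n, B1 <:+: tossWord ξ n ω} ∩ ({ω | ∃ n, B2 <:+: tossWord ξ n ω} ∩
        {ω | ∃ n, B3 <:+: tossWord ξ n ω}) := rfl
    rw [this]
    have hm : ∀ P : List Coin, MeasurableSet {ω | ∃ n, P <:+: tossWord ξ n ω} := by
      intro P
      have : {ω | ∃ n, P <:+: tossWord ξ n ω} = ⋃ n, {ω | P <:+: tossWord ξ n ω} := by
        ext ω; simp
      rw [this]
      exact MeasurableSet.iUnion fun n => measurableSet_occ ξ hmeas P n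
    exact (hm B1).inter ((hm B2).inter (hm B3))
  have hkey : ∀ A : Set Ω, μ (A ∩ G) = μ A := by
    intro A
    have h1 := measure_inter_add_diff (μ := μ) A hGmeas
    have hc : μ Gᶜ = 0 := by
      rw [measure_compl hGmeas (measure_ne_top μ G), hGfull, measure_univ, tsub_self]
    have h2 : μ (A \ G) = 0 :=
      measure_mono_null (fun x hx => hx.2) hc
    rw [← h1, h2, add_zero]
  have hmem : ∀ ω (tgt : St), ω ∈ WF ξ tgt .e ↔ ∃ N, run .e (tossWord ξ N ω) = tgt := by
    intro ω tgt
    simp [WF, Dset, Set.mem_iUnion]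
  have hpt : ∀ ω, ω ∈ G →
      ((min (min (firstOcc B1 ξ ω) (firstOcc B2 ξ ω)) (firstOcc B3 ξ ω) = firstOcc B1 ξ ω
        ↔ ω ∈ WF ξ .w1 .e) ∧
       (min (min (firstOcc B1 ξ ω) (firstOcc B2 ξ ω)) (firstOcc B3 ξ ω) = firstOcc B2 ξ ω
        ↔ ω ∈ WF ξ .w2 .e) ∧
       (min (min (firstOcc B1 ξ ω) (firstOcc B2 ξ ω)) (firstOcc B3 ξ ω) = firstOcc B3 ξ ω
        ↔ ω ∈ WF ξ .w3 .e)) := by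
    rintro ω ⟨h1, h2, h3⟩
    obtain ⟨t1, t2, t3⟩ := tau_iff_W ξ ω h1 h2 h3
    exact ⟨by rw [hmem ω .w1]; exact t1, by rw [hmem ω .w2]; exact t2,
      by rw [hmem ω .w3]; exact t3⟩
  have hseteq : ∀ (tgt : St)
      (F : Ω → ℕ) (hF : ∀ ω, ω ∈ G →
        (min (min (firstOcc B1 ξ ω) (firstOcc B2 ξ ω)) (firstOcc B3 ξ ω) = F ω
          ↔ ω ∈ WF ξ tgt .e)),
      {ω | min (min (firstOcc B1 ξ ω) (firstOcc B2 ξ ω)) (firstOcc B3 ξ ω) = F ω} ∩ G =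
        WF ξ tgt .e ∩ G := by
    intro tgt F hF
    ext ω
    constructor
    · rintro ⟨hm', hg⟩; exact ⟨(hF ω hg).mp hm', hg⟩
    · rintro ⟨hm', hg⟩; exact ⟨(hF ω hg).mpr hm', hg⟩
  refine ⟨?_, ?_, ?_⟩
  · show μ {ω | min (min (firstOcc B1 ξ ω) (firstOcc B2 ξ ω)) (firstOcc B3 ξ ω)
      = firstOcc B1 ξ ω} = 5 / 12
    rw [← hkey {ω | min (min (firstOcc B1 ξ ω) (firstOcc B2 ξ ω)) (firstOcc B3 ξ ω)
        = firstOcc B1 ξ ω},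
      hseteq .w1 (firstOcc B1 ξ) (fun ω hg => (hpt ω hg).1), hkey]
    exact meas_WF_w1 μ ξ hmeas hindep hdist
  · show μ {ω | min (min (firstOcc B1 ξ ω) (firstOcc B2 ξ ω)) (firstOcc B3 ξ ω)
      = firstOcc B2 ξ ω} = 1 / 3
    rw [← hkey {ω | min (min (firstOcc B1 ξ ω) (firstOcc B2 ξ ω)) (firstOcc B3 ξ ω)
        = firstOcc B2 ξ ω},
      hseteq .w2 (firstOcc B2 ξ) (fun ω hg => (hpt ω hg).2.1), hkey]
    exact meas_WF_w2 μ ξ hmeas hindep hdist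
  · show μ {ω | min (min (firstOcc B1 ξ ω) (firstOcc B2 ξ ω)) (firstOcc B3 ξ ω)
      = firstOcc B3 ξ ω} = 1 / 4
    rw [← hkey {ω | min (min (firstOcc B1 ξ ω) (firstOcc B2 ξ ω)) (firstOcc B3 ξ ω)
        = firstOcc B3 ξ ω},
      hseteq .w3 (firstOcc B3 ξ) (fun ω hg => (hpt ω hg).2.2), hkey]
    exact meas_WF_w3 μ ξ hmeas hindep hdist
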